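/- Let 0 < γ < 1/2 and let x_0, x_1, …, x_N be nonnegative real numbers satisfying x_k ≤ γ(x_{k-1} + x_{k+1}) for every 1 ≤ k ≤ N−1. Set ξ := (1 + √(1 − 4γ²))/(2γ). Then for every 0 ≤ k ≤ N one has x_k ≤ x_0·ξ^{−k} + x_N·ξ^{−(N−k)}. -/

import Mathlib

/-- **Three-interval lemma** (Mundet–Tian, Lemma 9.4). If `0 < γ < 1/2` and the
nonnegative numbers `x 0, …, x N` satisfy `x k ≤ γ (x (k-1) + x (k+1))` for
`1 ≤ k ≤ N - 1`, then with `ξ = (1 + √(1 - 4γ²))/(2γ)` one has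
`x k ≤ x 0 * ξ⁻ᵏ + x N * ξ⁻⁽ᴺ⁻ᵏ⁾` for all `0 ≤ k ≤ N`. -/
theorem three_interval_lemma (γ : ℝ) (hγ0 : 0 < γ) (hγ : γ < 1 / 2)
    (N : ℕ) (x : ℕ → ℝ) (hnn : ∀ k, k ≤ N → 0 ≤ x k)
    (hrec : ∀ k, 1 ≤ k → k + 1 ≤ N → x k ≤ γ * (x (k - 1) + x (k + 1))) :
    ∀ k, k ≤ N →
      x k ≤ x 0 * ((1 + Real.sqrt (1 - 4 * γ ^ 2)) / (2 * γ))⁻¹ ^ k +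
        x N * ((1 + Real.sqrt (1 - 4 * γ ^ 2)) / (2 * γ))⁻¹ ^ (N - k) := by
  have hγ2 : (0:ℝ) ≤ 1 - 4 * γ ^ 2 := by nlinarith
  set s := Real.sqrt (1 - 4 * γ ^ 2) with hs
  have hs0 : 0 ≤ s := Real.sqrt_nonneg _
  have hs2 : s ^ 2 = 1 - 4 * γ ^ 2 := Real.sq_sqrt hγ2
  set a : ℝ := ((1 + s) / (2 * γ))⁻¹ with ha
  have h1s : (0:ℝ) < 1 + s := by linarith
  have ha0 : 0 ≤ a := by positivity
  have hkey : γ * (1 + a ^ 2) = a := by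
    rw [ha]
    rw [inv_div]
    field_simp
    linear_combination hs2
  set y : ℕ → ℝ := fun k => x 0 * a ^ k + x N * a ^ (N - k) with hy
  have hyrec : ∀ k, 1 ≤ k → k + 1 ≤ N → y k = γ * (y (k - 1) + y (k + 1)) := by
    intro k hk1 hkN
    obtain ⟨m, rfl⟩ : ∃ m, k = m + 1 := ⟨k - 1, (Nat.succ_pred_eq_of_pos hk1).symm⟩
    have h1 : m + 1 + 1 - 1 = m + 1 := rfl
    have h2 : m + 1 + 1 ≤ N := hkN
    have hNm : N - (m + 1) + 1 = N - m := by omega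
    have hNm2 : N - (m + 1 + 1) + 1 = N - (m + 1) := by omega
    have pow_rec : ∀ j : ℕ, a ^ (j + 1) = γ * (a ^ j + a ^ (j + 2)) := by
      intro j
      have := hkey
      calc a ^ (j + 1) = a ^ j * a := by ring
        _ = a ^ j * (γ * (1 + a ^ 2)) := by rw [hkey]
        _ = γ * (a ^ j + a ^ (j + 2)) := by ring
    simp only [hy, Nat.add_sub_cancel]
    have e1 : a ^ (m + 1) = γ * (a ^ m + a ^ (m + 2)) := pow_rec m
    have e2 : a ^ (N - (m + 1)) = γ * (a ^ (N - (m + 1) - 1) + a ^ (N - (m + 1) + 1)) := by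
      have hpos : 1 ≤ N - (m + 1) := by omega
      obtain ⟨j, hj⟩ : ∃ j, N - (m + 1) = j + 1 := ⟨N - (m + 1) - 1, by omega⟩
      rw [hj]
      have : j + 1 - 1 = j := rfl
      rw [this]
      exact pow_rec j
    have hm1 : N - m = N - (m + 1) + 1 := by omega
    have hm2 : N - (m + 1 + 1) = N - (m + 1) - 1 := by omega
    rw [hm1, hm2, e1]
    rw [e2]
    ring
  -- maximum principle
  set T : Finset ℕ := Finset.range (N + 1) with hT
  have hTne : T.Nonempty := ⟨0, by simp [hT]⟩
  obtain ⟨j, hjT, hjmax⟩ := T.exists_max_image (fun k => x k - y k) hTne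
  set M : ℝ := x j - y j with hM
  have hjN : j ≤ N := by simpa [hT, Nat.lt_succ_iff] using hjT
  have hle : ∀ k, k ≤ N → x k - y k ≤ M := by
    intro k hk
    exact hjmax k (by simp [hT, Nat.lt_succ_iff, hk])
  have hM0 : M ≤ 0 := by
    have hx0 : 0 ≤ x 0 := hnn 0 (Nat.zero_le _)
    have hxN : 0 ≤ x N := hnn N le_rfl
    rcases eq_or_ne j 0 with rfl | hj0
    · have hy0 : y 0 = x 0 + x N * a ^ N := by simp [hy]
      have : 0 ≤ x N * a ^ N := by positivity
      rw [hM, hy0]; linarith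
    rcases eq_or_ne j N with hjN' | hjN'
    · have h0 : N - j = 0 := by omega
      have hyN : y j = x 0 * a ^ j + x N := by simp [hy, h0]
      have : 0 ≤ x 0 * a ^ j := by positivity
      have hxj : x j = x N := by rw [hjN']
      rw [hM, hyN, hxj]; linarith
    · have hj1 : 1 ≤ j := Nat.one_le_iff_ne_zero.mpr hj0
      have hjN1 : j + 1 ≤ N := by omega
      have h1 : x j ≤ γ * (x (j - 1) + x (j + 1)) := hrec j hj1 hjN1
      have h2 : y j = γ * (y (j - 1) + y (j + 1)) := hyrec j hj1 hjN1
      have h3 : x (j - 1) - y (j - 1) ≤ M := hle (j - 1) (by omega)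
      have h4 : x (j + 1) - y (j + 1) ≤ M := hle (j + 1) hjN1
      have hMle : M ≤ 2 * γ * M := by
        have h6 : x j - y j ≤ γ * ((x (j - 1) - y (j - 1)) + (x (j + 1) - y (j + 1))) := by
          rw [h2]; ring_nf; ring_nf at h1; linarith
        have h5 : γ * ((x (j - 1) - y (j - 1)) + (x (j + 1) - y (j + 1))) ≤ γ * (M + M) :=
          mul_le_mul_of_nonneg_left (by linarith) (le_of_lt hγ0)
        have h7 : γ * (M + M) = 2 * γ * M := by ring
        linarith [hM.le, hM.ge]
      nlinarith
  intro k hk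
  have := hle k hk
  have : x k - y k ≤ 0 := le_trans this hM0
  have hyk : y k = x 0 * a ^ k + x N * a ^ (N - k) := rfl
  linarith [this]
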